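/- For every h ∈ ℕ, the graph G_h (complete binary tree of height h with all root-to-leaf paths completed into cliques) has a clique-partitioned tree decomposition whose tree is a path, with one bag per root-to-leaf path, each bag being a single clique of size h+1; hence each bag has weight log₂(h + 2), and every edge of G_h is contained in some bag. -/

import Mathlib

/-- Vertices of the complete binary tree of height `h`: binary strings of length at most `h`. -/
def TreeVert (h : ℕ) : Type := {l : List Bool // l.length ≤ h}

instance (h : ℕ) : DecidableEq (TreeVert h) := by
  unfold TreeVert; infer_instance

/-- The graph `G_h`: the complete binary tree of height `h` in which every
root-to-leaf path is completed into a clique.  Two distinct vertices are adjacent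
iff one lies on the root path of the other, i.e. one is a prefix of the other. -/
def treeCliqueGraph (h : ℕ) : SimpleGraph (TreeVert h) where
  Adj u v := u ≠ v ∧ (u.1 <+: v.1 ∨ v.1 <+: u.1)
  symm := by constructor; rintro u v ⟨hne, hpre⟩; exact ⟨hne.symm, hpre.symm⟩
  loopless := by constructor; rintro u ⟨hne, _⟩; exact hne rfl

/-- The numeric value of a binary string, most significant bit first;
used to order the leaves (and hence the bags) along a path. -/
def leafVal (l : List Bool) : ℕ :=
  l.foldl (fun n b => 2 * n + cond b 1 0) 0

lemma leafVal_foldl (b : List Bool) : ∀ n : ℕ,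
    b.foldl (fun n b => 2 * n + cond b 1 0) n = n * 2 ^ b.length + leafVal b := by
  induction b with
  | nil => intro n; simp [leafVal]
  | cons x b ih =>
    intro n
    have h1 : leafVal (x :: b) = (cond x 1 0) * 2 ^ b.length + leafVal b := by
      simp only [leafVal, List.foldl_cons]
      rw [ih]
      show _ = (cond x 1 0) * 2 ^ b.length + leafVal b
      ring
    simp only [List.foldl_cons, List.length_cons]
    rw [ih, h1]
    ring

lemma leafVal_lt (b : List Bool) : leafVal b < 2 ^ b.length := by
  induction b with
  | nil => simp [leafVal]
  | cons x b ih =>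
    have h1 : leafVal (x :: b) = (cond x 1 0) * 2 ^ b.length + leafVal b := by
      simp only [leafVal, List.foldl_cons]
      rw [leafVal_foldl]
      show _ = (cond x 1 0) * 2 ^ b.length + leafVal b
      ring
    rw [h1]
    cases x <;> simp [List.length_cons, pow_succ] <;> omega

lemma leafVal_inj : ∀ a b : List Bool, a.length = b.length → leafVal a = leafVal b → a = b := by
  intro a
  induction a with
  | nil => intro b hl _; cases b <;> simp_all
  | cons x a ih =>
    intro b hl hv
    cases b with
    | nil => simp_all
    | cons y b =>
      simp only [List.length_cons, Nat.add_right_cancel_iff] at hl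
      have hx : leafVal (x :: a) = (cond x 1 0) * 2 ^ a.length + leafVal a := by
        simp only [leafVal, List.foldl_cons]; rw [leafVal_foldl]
        show _ = (cond x 1 0) * 2 ^ a.length + leafVal a
        ring
      have hy : leafVal (y :: b) = (cond y 1 0) * 2 ^ b.length + leafVal b := by
        simp only [leafVal, List.foldl_cons]; rw [leafVal_foldl]
        show _ = (cond y 1 0) * 2 ^ b.length + leafVal b
        ring
      have ha := leafVal_lt a
      have hb := leafVal_lt b
      rw [hx, hy, hl] at hv
      have hxy : x = y := by
        cases x <;> cases y <;> simp_all <;> omega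
      subst hxy
      have : leafVal a = leafVal b := by omega
      rw [ih b hl this]

lemma leafVal_append (a b : List Bool) :
    leafVal (a ++ b) = leafVal a * 2 ^ b.length + leafVal b := by
  simp only [leafVal, List.foldl_append]
  rw [leafVal_foldl]
  rfl

theorem stmt_19 (h : ℕ) :
    -- every bag (the set of vertices on a root-to-leaf path) is a single clique …
    (∀ ℓ : List Bool, ℓ.length = h →
      (treeCliqueGraph h).IsClique {v : TreeVert h | v.1 <+: ℓ}) ∧
    -- … of size h + 1, hence of weight log₂(h + 2)
    (∀ ℓ : List Bool, ℓ.length = h →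
      {v : TreeVert h | v.1 <+: ℓ}.ncard = h + 1 ∧
      Real.logb 2 ({v : TreeVert h | v.1 <+: ℓ}.ncard + 1) = Real.logb 2 (h + 2)) ∧
    -- every vertex of G_h is contained in some bag
    (∀ v : TreeVert h, ∃ ℓ : List Bool, ℓ.length = h ∧ v.1 <+: ℓ) ∧
    -- every edge of G_h is contained in some bag
    (∀ u v : TreeVert h, (treeCliqueGraph h).Adj u v →
      ∃ ℓ : List Bool, ℓ.length = h ∧ u.1 <+: ℓ ∧ v.1 <+: ℓ) ∧
    -- the bags containing a fixed vertex form a contiguous segment of the path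
    -- obtained by ordering the leaves by their numeric value
    (∀ ℓ₁ ℓ₂ ℓ₃ : List Bool, ℓ₁.length = h → ℓ₂.length = h → ℓ₃.length = h →
      leafVal ℓ₁ ≤ leafVal ℓ₂ → leafVal ℓ₂ ≤ leafVal ℓ₃ →
      ∀ v : TreeVert h, v.1 <+: ℓ₁ → v.1 <+: ℓ₃ → v.1 <+: ℓ₂) := by
  have hext : ∀ v : TreeVert h, ∃ ℓ : List Bool, ℓ.length = h ∧ v.1 <+: ℓ := by
    intro v
    refine ⟨v.1 ++ List.replicate (h - v.1.length) false, ?_, List.prefix_append _ _⟩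
    have := v.2
    simp [List.length_append, List.length_replicate]
    omega
  refine ⟨?_, ?_, hext, ?_, ?_⟩
  · intro ℓ hℓ u hu v hv huv
    exact ⟨huv, List.prefix_or_prefix_of_prefix hu hv⟩
  · intro ℓ hℓ
    have hc : {v : TreeVert h | v.1 <+: ℓ}.ncard = h + 1 := by
      have hrange : {v : TreeVert h | v.1 <+: ℓ} =
          Set.range (fun i : Fin (h+1) =>
            (⟨ℓ.take i, by simp [hℓ]⟩ : TreeVert h)) := by
        ext v
        constructor
        · intro hv
          have hvl : v.1.length ≤ h := v.2
          refine ⟨⟨v.1.length, by omega⟩, ?_⟩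
          apply Subtype.ext
          simp
          exact (List.prefix_iff_eq_take.mp hv).symm
        · rintro ⟨i, rfl⟩
          exact List.take_prefix _ _
      have hinj : Function.Injective (fun i : Fin (h+1) =>
          (⟨ℓ.take i, by simp [hℓ]⟩ : TreeVert h)) := by
        intro i j hij
        have : (ℓ.take i.1).length = (ℓ.take j.1).length := by
          rw [Subtype.ext_iff] at hij
          simp only at hij
          rw [hij]
        simp [hℓ] at this
        have hi := i.2
        have hj := j.2
        ext
        omega
      rw [hrange]; refine (Set.ncard_range_of_injective hinj).trans ?_
      simp
    refine ⟨hc, ?_⟩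
    rw [hc]
    push_cast
    ring_nf
  · intro u v ⟨_, hpre⟩
    rcases hpre with hp | hp
    · obtain ⟨ℓ, hℓ, hv⟩ := hext v
      exact ⟨ℓ, hℓ, hp.trans hv, hv⟩
    · obtain ⟨ℓ, hℓ, hu⟩ := hext u
      exact ⟨ℓ, hℓ, hu, hp.trans hu⟩
  · intro ℓ₁ ℓ₂ ℓ₃ h1 h2 h3 h12 h23 v hv1 hv3
    obtain ⟨a, ha⟩ := hv1
    obtain ⟨b, hb⟩ := hv3
    set m := v.1.length with hm
    have hmh : m ≤ h := v.2
    have hal : a.length = h - m := by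
      have := congrArg List.length ha
      simp at this
      omega
    have hbl : b.length = h - m := by
      have := congrArg List.length hb
      simp at this
      omega
    set k := h - m with hk
    have hdl : (ℓ₂.drop m).length = k := by simp [h2]; omega
    have htl : (ℓ₂.take m).length = m := by simp [h2]; omega
    have h2split : leafVal ℓ₂ = leafVal (ℓ₂.take m) * 2 ^ k + leafVal (ℓ₂.drop m) := by
      conv_lhs => rw [← List.take_append_drop m ℓ₂]
      rw [leafVal_append, hdl]
    have h1split : leafVal ℓ₁ = leafVal v.1 * 2 ^ k + leafVal a := by
      rw [← ha, leafVal_append, hal]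
    have h3split : leafVal ℓ₃ = leafVal v.1 * 2 ^ k + leafVal b := by
      rw [← hb, leafVal_append, hbl]
    have hda : leafVal (ℓ₂.drop m) < 2 ^ k := by
      have := leafVal_lt (ℓ₂.drop m); rwa [hdl] at this
    have hba : leafVal b < 2 ^ k := by
      have := leafVal_lt b; rwa [hbl] at this
    have hle1 : leafVal v.1 * 2 ^ k ≤ leafVal (ℓ₂.take m) * 2 ^ k + leafVal (ℓ₂.drop m) := by
      rw [← h2split]
      calc leafVal v.1 * 2 ^ k ≤ leafVal ℓ₁ := by rw [h1split]; omega
        _ ≤ leafVal ℓ₂ := h12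
    have hle2 : leafVal (ℓ₂.take m) * 2 ^ k + leafVal (ℓ₂.drop m)
        < (leafVal v.1 + 1) * 2 ^ k := by
      rw [← h2split]
      calc leafVal ℓ₂ ≤ leafVal ℓ₃ := h23
        _ < (leafVal v.1 + 1) * 2 ^ k := by
          rw [h3split]
          have hh : (leafVal v.1 + 1) * 2 ^ k = leafVal v.1 * 2 ^ k + 2 ^ k := by ring
          omega
    have hpos : 0 < 2 ^ k := Nat.pow_pos (by norm_num)
    have heq : leafVal (ℓ₂.take m) = leafVal v.1 := by
      by_contra hne
      rcases Nat.lt_or_ge (leafVal (ℓ₂.take m)) (leafVal v.1) with hlt | hge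
      · have h5 : leafVal (ℓ₂.take m) + 1 ≤ leafVal v.1 := hlt
        have h6 := Nat.mul_le_mul_right (2 ^ k) h5
        have hh : (leafVal (ℓ₂.take m) + 1) * 2 ^ k
            = leafVal (ℓ₂.take m) * 2 ^ k + 2 ^ k := by ring
        omega
      · have h5 : leafVal v.1 + 1 ≤ leafVal (ℓ₂.take m) := by omega
        have h6 := Nat.mul_le_mul_right (2 ^ k) h5
        omega
    have : ℓ₂.take m = v.1 := leafVal_inj _ _ (by rw [htl]) heq
    have hp := List.take_prefix m ℓ₂
    rwa [this] at hp
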